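/- In the deep inference system IBV, the general identity rule i↓ (proving 1 implies A⊸A for any formula A, in positive context) is derivable: for every formula A there is a positive IBV derivation from premise 1 to conclusion A⊸A. -/

import Mathlib

/-- IBV formulas: A ::= a | 1 | A⊗A | A⊸A | A◁A. -/
inductive IBVF : Type
  | atom : ℕ → IBVF
  | one : IBVF
  | tens : IBVF → IBVF → IBVF
  | limp : IBVF → IBVF → IBVF
  | seq : IBVF → IBVF → IBVF

open IBVF

/-- The inference rules of the deep inference system IBV, rewriting the premise
    to the conclusion.  The Boolean index is the polarity of the context where
    the rule may be applied: `true` = positive (∘-rules), `false` = negative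
    (•-rules); rules with a universally quantified polarity apply in both. -/
inductive IBVRule : Bool → IBVF → IBVF → Prop
  | ai_down (a : ℕ) : IBVRule true one (limp (atom a) (atom a))
  | u_down_seqL (A : IBVF) : IBVRule true A (seq one A)
  | u_down_seqR (A : IBVF) : IBVRule true A (seq A one)
  | ref_pos (A B : IBVF) : IBVRule true (tens A B) (seq A B)
  | ref_neg (A B : IBVF) : IBVRule false (seq A B) (tens A B)
  | sL_pos (A B C : IBVF) : IBVRule true (tens A (limp B C)) (limp (limp A B) C)
  | sR_pos (A B C : IBVF) : IBVRule true (tens (limp A B) C) (limp A (tens B C))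
  | sL_neg (A B C : IBVF) : IBVRule false (limp (limp A B) C) (tens A (limp B C))
  | sR_neg (A B C : IBVF) : IBVRule false (limp A (tens B C)) (tens (limp A B) C)
  | sqL_pos (A B C : IBVF) : IBVRule true (seq (limp A B) C) (limp A (seq B C))
  | sqR_pos (A B C : IBVF) : IBVRule true (seq B (limp A C)) (limp A (seq B C))
  | sqL_neg (A B C : IBVF) : IBVRule false (seq (tens A B) C) (tens A (seq B C))
  | sqR_neg (A B C : IBVF) : IBVRule false (seq B (tens A C)) (tens A (seq B C))
  | q_down_pos (A B C D : IBVF) :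
      IBVRule true (seq (limp A B) (limp C D)) (limp (seq A C) (seq B D))
  | q_down_neg (A B C D : IBVF) :
      IBVRule false (seq (tens A B) (tens C D)) (tens (seq A C) (seq B D))
  | com_tens (p : Bool) (A B : IBVF) : IBVRule p (tens A B) (tens B A)
  | asso_tens (p : Bool) (A B C : IBVF) :
      IBVRule p (tens (tens A B) C) (tens A (tens B C))
  | assoL_seq (p : Bool) (A B C : IBVF) :
      IBVRule p (seq (seq A B) C) (seq A (seq B C))
  | assoR_seq (p : Bool) (A B C : IBVF) :
      IBVRule p (seq A (seq B C)) (seq (seq A B) C)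
  | u_down_tens (p : Bool) (A : IBVF) : IBVRule p A (tens one A)
  | u_down_limp (p : Bool) (A : IBVF) : IBVRule p A (limp one A)
  | cur (p : Bool) (A B C : IBVF) :
      IBVRule p (limp (tens A B) C) (limp A (limp B C))
  | ruc (p : Bool) (A B C : IBVF) :
      IBVRule p (limp A (limp B C)) (limp (tens A B) C)

/-- The up-rules added to IBV to form the symmetric system SIBV. -/
inductive UpRule : Bool → IBVF → IBVF → Prop
  | ai_up (a : ℕ) : UpRule false (limp (atom a) (atom a)) one
  | u_up_seqL (A : IBVF) : UpRule false (seq one A) A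
  | u_up_seqR (A : IBVF) : UpRule false (seq A one) A
  | u_up_tens (p : Bool) (A : IBVF) : UpRule p (tens one A) A
  | u_up_limp (p : Bool) (A : IBVF) : UpRule p (limp one A) A
  | q_up_pos (A B C D : IBVF) :
      UpRule true (tens (seq A C) (seq B D)) (seq (tens A B) (tens C D))
  | q_up_neg (A B C D : IBVF) :
      UpRule false (limp (seq A C) (seq B D)) (seq (limp A B) (limp C D))

/-- The rules of the symmetric system SIBV: the IBV rules plus the up-rules. -/
def SIBVRule (p : Bool) (A B : IBVF) : Prop := IBVRule p A B ∨ UpRule p A B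

/-- One deep rewrite step, for a given rule system `R`.  `Step R p X Y` means
    that `X` rewrites to `Y` by applying a rule of `R` at some position whose
    polarity (relative to the ambient polarity `p`) matches the rule's polarity
    annotation; polarity flips when descending into the left of a ⊸. -/
inductive Step (R : Bool → IBVF → IBVF → Prop) : Bool → IBVF → IBVF → Prop
  | rule {p : Bool} {A B : IBVF} : R p A B → Step R p A B
  | tensL {p : Bool} {A A' B : IBVF} :
      Step R p A A' → Step R p (tens A B) (tens A' B)
  | tensR {p : Bool} {A B B' : IBVF} :
      Step R p B B' → Step R p (tens A B) (tens A B')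
  | seqL {p : Bool} {A A' B : IBVF} :
      Step R p A A' → Step R p (seq A B) (seq A' B)
  | seqR {p : Bool} {A B B' : IBVF} :
      Step R p B B' → Step R p (seq A B) (seq A B')
  | limpL {p : Bool} {A A' B : IBVF} :
      Step R (!p) A A' → Step R p (limp A B) (limp A' B)
  | limpR {p : Bool} {A B B' : IBVF} :
      Step R p B B' → Step R p (limp A B) (limp A B')

/-- A derivation of polarity `p` (`true` = positive, `false` = negative) in the
    system `R` from premise `X` to conclusion `Y`: a finite sequence of deep
    rewrite steps. -/
def Deriv (R : Bool → IBVF → IBVF → Prop) (p : Bool) : IBVF → IBVF → Prop :=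
  Relation.ReflTransGen (Step R p)

/-- A formula is provable in IBV if there is a positive derivation from 1. -/
def IBVProvable (A : IBVF) : Prop := Deriv IBVRule true one A

/-- A formula is provable in SIBV if there is a positive derivation from 1. -/
def SIBVProvable (A : IBVF) : Prop := Deriv SIBVRule true one A


namespace IBVAux

variable {R : Bool → IBVF → IBVF → Prop}

lemma dtensL {p A A'} (B) (h : Deriv R p A A') :
    Deriv R p (tens A B) (tens A' B) :=
  Relation.ReflTransGen.lift (fun X => tens X B) (fun _ _ h => Step.tensL h) _ _ h

lemma dtensR {p B B'} (A) (h : Deriv R p B B') :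
    Deriv R p (tens A B) (tens A B') :=
  Relation.ReflTransGen.lift (fun X => tens A X) (fun _ _ h => Step.tensR h) _ _ h

lemma dseqL {p A A'} (B) (h : Deriv R p A A') :
    Deriv R p (seq A B) (seq A' B) :=
  Relation.ReflTransGen.lift (fun X => seq X B) (fun _ _ h => Step.seqL h) _ _ h

lemma dseqR {p B B'} (A) (h : Deriv R p B B') :
    Deriv R p (seq A B) (seq A B') :=
  Relation.ReflTransGen.lift (fun X => seq A X) (fun _ _ h => Step.seqR h) _ _ h

lemma dlimpL {p A A'} (B) (h : Deriv R (!p) A A') :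
    Deriv R p (limp A B) (limp A' B) :=
  Relation.ReflTransGen.lift (fun X => limp X B) (fun _ _ h => Step.limpL h) _ _ h

lemma dlimpR {p B B'} (A) (h : Deriv R p B B') :
    Deriv R p (limp A B) (limp A B') :=
  Relation.ReflTransGen.lift (fun X => limp A X) (fun _ _ h => Step.limpR h) _ _ h

lemma one_step {p A B} (h : R p A B) : Deriv R p A B :=
  Relation.ReflTransGen.single (Step.rule h)

end IBVAux

open IBVAux in
/-- The general identity rule i↓∘ is derivable in IBV: for every formula A there
    is a positive IBV derivation from 1 to A⊸A. -/
theorem IBV.identity_derivable (A : IBVF) : Deriv IBVRule true one (limp A A) := by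
  induction A with
  | atom a => exact one_step (IBVRule.ai_down a)
  | one => exact one_step (IBVRule.u_down_limp true one)
  | tens A B ihA ihB =>
      -- 1 ⇒ A⊸A ⇒ A⊸(1⊗A) ⇒ A⊸((B⊸B)⊗A) ⇒ A⊸(B⊸(B⊗A)) ⇒ A⊸(B⊸(A⊗B)) ⇒ (A⊗B)⊸(A⊗B)
      refine ihA.trans ?_
      refine (dlimpR A (Relation.ReflTransGen.single
        (Step.rule (IBVRule.u_down_tens true A)))).trans ?_
      refine (dlimpR A (dtensL A ihB)).trans ?_
      refine (dlimpR A (one_step (IBVRule.sR_pos B B A))).trans ?_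
      refine (dlimpR A (dlimpR B (one_step (IBVRule.com_tens true B A)))).trans ?_
      exact one_step (IBVRule.ruc true A B (tens A B))
  | limp A B ihA ihB =>
      -- 1 ⇒ B⊸B ⇒ (1⊸B)⊸B ⇒ ((A⊸A)⊸B)⊸B ⇒ (A⊗(A⊸B))⊸B ⇒ ((A⊸B)⊗A)⊸B ⇒ (A⊸B)⊸(A⊸B)
      refine ihB.trans ?_
      refine (dlimpL B (p := true)
        (one_step (IBVRule.u_down_limp false B))).trans ?_
      refine (dlimpL B (p := true) (dlimpL B (p := false) ihA)).trans ?_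
      refine (dlimpL B (p := true)
        (one_step (IBVRule.sL_neg A A B))).trans ?_
      refine (dlimpL B (p := true)
        (one_step (IBVRule.com_tens false A (limp A B)))).trans ?_
      exact one_step (IBVRule.cur true (limp A B) A B)
  | seq A B ihA ihB =>
      -- 1 ⇒ 1◁1 ⇒ (A⊸A)◁(B⊸B) ⇒ (A◁B)⊸(A◁B)
      refine (one_step (IBVRule.u_down_seqL one)).trans ?_
      refine (dseqL one ihA).trans ?_
      refine (dseqR (limp A A) ihB).trans ?_
      exact one_step (IBVRule.q_down_pos A A B B)
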